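/- For all n ≥ 0, the plane 1-2 hipster numbers satisfy 0 < h_n ≤ m_n, where m_n is the n-th Motzkin number. -/

import Mathlib

/-- For all `n ≥ 0`, the plane 1-2 hipster numbers satisfy `0 < h n ≤ m n`,
where `m n` is the `n`-th Motzkin number. -/
theorem plane12_hipster_le_motzkin
    (m h : ℕ → ℤ)
    (hm0 : m 0 = 1)
    (hm : ∀ n, 1 ≤ n →
      m n = m (n - 1) + ∑ i ∈ Finset.range (n - 1), m i * m (n - 2 - i))
    (hh0 : h 0 = 1)
    (hh : ∀ n, 1 ≤ n →
      h n = (∑ i ∈ Finset.Ico 1 n, h i * h (n - 1 - i))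
              - (if Odd n then h ((n - 1) / 2) else 0)
              + 2 * (if n = 1 then 1 else 0)) :
    ∀ n, 0 < h n ∧ h n ≤ m n := by
  -- m is everywhere positive
  have hmpos : ∀ n, 0 < m n := by
    intro n
    induction n using Nat.strong_induction_on with
    | _ n ih =>
      match n, ih with
      | 0, _ => simpa [hm0]
      | (k+1), ih =>
        rw [hm (k+1) (by omega)]
        have h1 : 0 < m ((k+1) - 1) := ih k (by omega)
        have h2 : (0:ℤ) ≤ ∑ i ∈ Finset.range ((k+1) - 1), m i * m ((k+1) - 2 - i) := by
          apply Finset.sum_nonneg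
          intro i hi
          simp only [Finset.mem_range] at hi
          have := ih i (by omega)
          have := ih ((k+1) - 2 - i) (by omega)
          positivity
        linarith
  -- key strengthened claim
  have key : ∀ n, 0 < h n ∧ h n ≤ m (n - 1) := by
    intro n
    induction n using Nat.strong_induction_on with
    | _ n ih =>
      match n, ih with
      | 0, _ => constructor <;> simp [hh0, hm0]
      | 1, _ =>
        have e : h 1 = 1 := by
          rw [hh 1 le_rfl]
          simp [hh0]
        constructor <;> simp [e, hm0]
      | (k+2), ih =>
        set n := k + 2 with hn
        have hn2 : 2 ≤ n := by omega
        -- rewrite the sum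
        have e1 : ∑ i ∈ Finset.Ico 1 n, h i * h (n - 1 - i)
            = (∑ j ∈ Finset.range (n - 2), h (j+1) * h (n - 2 - j)) + h (n - 1) := by
          have h1 : n = (n - 1) + 1 := by omega
          rw [h1, Finset.sum_Ico_succ_top (by omega)]
          have h2 : (n - 1 + 1) - 1 - (n - 1) = 0 := by omega
          rw [h2, hh0, mul_one]
          congr 1
          rw [Finset.sum_Ico_eq_sum_range]
          apply Finset.sum_congr (by congr 1 <;> omega)
          intro j hj
          simp only [Finset.mem_range] at hj
          congr 2 <;> omega
        -- termwise comparison with Motzkin convolution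
        have e2 : (∑ j ∈ Finset.range (n - 2), h (j+1) * h (n - 2 - j))
            ≤ ∑ j ∈ Finset.range (n - 2), m j * m (n - 3 - j) := by
          apply Finset.sum_le_sum
          intro j hj
          simp only [Finset.mem_range] at hj
          have ih1 := ih (j+1) (by omega)
          have ih2 := ih (n - 2 - j) (by omega)
          have e3 : (j + 1) - 1 = j := by omega
          have e4 : (n - 2 - j) - 1 = n - 3 - j := by omega
          rw [e3] at ih1; rw [e4] at ih2
          have := hmpos j
          apply mul_le_mul ih1.2 ih2.2 (le_of_lt ih2.1) (le_of_lt (hmpos j))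
        -- Motzkin recurrence at n-1
        have e5 : m (n - 1) = m (n - 2) + ∑ j ∈ Finset.range (n - 2), m j * m (n - 3 - j) := by
          have a1 : n - 1 - 1 = n - 2 := by omega
          rw [hm (n - 1) (by omega), a1]
          congr 1
        have ihn1 := ih (n - 1) (by omega)
        have e6 : (n - 1) - 1 = n - 2 := by omega
        rw [e6] at ihn1
        -- nonnegativity of all summands
        have hterm : ∀ i ∈ Finset.Ico 1 n, (0:ℤ) ≤ h i * h (n - 1 - i) := by
          intro i hi
          simp only [Finset.mem_Ico] at hi
          have p1 := (ih i (by omega)).1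
          have p2 := (ih (n - 1 - i) (by omega)).1
          positivity
        have hne1 : ¬ (n = 1) := by omega
        have hhn := hh n (by omega)
        rw [if_neg hne1] at hhn
        constructor
        · -- positivity of h n
          rcases Nat.even_or_odd n with he | ho
          · rw [hhn, if_neg (by simpa using he)]
            have hle : h (n-1) * h (n - 1 - (n-1)) ≤ ∑ i ∈ Finset.Ico 1 n, h i * h (n - 1 - i) :=
              Finset.single_le_sum hterm (by simp only [Finset.mem_Ico]; omega)
            have e7 : n - 1 - (n - 1) = 0 := by omega
            rw [e7, hh0, mul_one] at hle
            have := ih (n-1) (by omega)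
            linarith [this.1]
          · rw [hhn, if_pos ho]
            obtain ⟨t, ht⟩ := ho
            set c := (n - 1) / 2 with hc
            have hck : n - 1 = 2 * c := by omega
            have hc1 : 1 ≤ c := by omega
            have hcn : c < n - 1 := by omega
            have hsub : ({c, n-1} : Finset ℕ) ⊆ Finset.Ico 1 n := by
              intro x hx
              simp only [Finset.mem_insert, Finset.mem_singleton] at hx
              simp only [Finset.mem_Ico]
              omega
            have hpair : ∑ i ∈ ({c, n-1} : Finset ℕ), h i * h (n - 1 - i)
                ≤ ∑ i ∈ Finset.Ico 1 n, h i * h (n - 1 - i) := by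
              apply Finset.sum_le_sum_of_subset_of_nonneg hsub
              intro i hi _
              exact hterm i hi
            rw [Finset.sum_pair (by omega)] at hpair
            have e8 : n - 1 - c = c := by omega
            have e9 : n - 1 - (n - 1) = 0 := by omega
            rw [e8, e9, hh0, mul_one] at hpair
            have ihc := ih c (by omega)
            have ihn := ih (n-1) (by omega)
            nlinarith [ihc.1, ihn.1]
        · -- upper bound
          have hodd : (0:ℤ) ≤ (if Odd n then h ((n - 1) / 2) else 0) := by
            split
            · exact le_of_lt (ih ((n-1)/2) (by omega)).1
            · exact le_refl 0
          rw [hhn, e1, e5]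
          linarith [ihn1.2, e2, hodd]
  intro n
  refine ⟨(key n).1, ?_⟩
  rcases Nat.eq_zero_or_pos n with rfl | hn
  · simpa using (key 0).2
  · have h1 := (key n).2
    have h2 : m (n - 1) ≤ m n := by
      rw [hm n hn]
      have : (0:ℤ) ≤ ∑ i ∈ Finset.range (n - 1), m i * m (n - 2 - i) := by
        apply Finset.sum_nonneg
        intro i _
        exact le_of_lt (mul_pos (hmpos i) (hmpos _))
      linarith
    linarith
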